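/- The embedding relation ≤ on finite rooted labeled trees of depth at most K over a finite label alphabet (T_1 ≤ T_2 iff there is an injective map from the nodes of T_1 to the nodes of T_2 preserving the root, the labels, and the parent-child relation) is a well-quasi-order: every infinite sequence T_0, T_1, ... of such trees contains indices i < j with T_i ≤ T_j. -/

import Mathlib

/-- A finite rooted unordered tree with nodes labeled by `σ`. -/
structure LTree (σ : Type) where
  U : Type
  fin : Fintype U
  root : U
  parent : U → U
  parent_root : parent root = root
  depth : U → ℕ
  depth_root : depth root = 0
  depth_succ : ∀ u, u ≠ root → depth u = depth (parent u) + 1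
  label : U → σ

/-- `T₁ ≤ T₂`: an injective map preserving root, labels and the parent-child relation. -/
def LTree.Emb {σ : Type} (T₁ T₂ : LTree σ) : Prop :=
  ∃ φ : T₁.U → T₂.U, Function.Injective φ ∧ φ T₁.root = T₂.root ∧
    (∀ u, T₂.label (φ u) = T₁.label u) ∧
    ∀ u, u ≠ T₁.root → φ u ≠ T₂.root ∧ T₂.parent (φ u) = φ (T₁.parent u)

namespace LTreeWQO

open Classical

variable {σ : Type}

/-- `v` is a descendant of `u` (including `u` itself). -/
def Desc (T : LTree σ) (u v : T.U) : Prop :=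
  T.depth u ≤ T.depth v ∧ T.parent^[T.depth v - T.depth u] v = u

lemma depth_eq_zero {T : LTree σ} {v : T.U} (h : T.depth v = 0) : v = T.root := by
  by_contra hne
  rw [T.depth_succ v hne] at h
  omega

lemma depth_parent {T : LTree σ} {v : T.U} (h : v ≠ T.root) :
    T.depth (T.parent v) = T.depth v - 1 := by
  have := T.depth_succ v h; omega

lemma ne_root_of_depth_pos {T : LTree σ} {v : T.U} (h : 0 < T.depth v) : v ≠ T.root := by
  intro hv; rw [hv, T.depth_root] at h; omega

lemma depth_iterate (T : LTree σ) : ∀ (m : ℕ) (v : T.U), m ≤ T.depth v →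
    T.depth (T.parent^[m] v) = T.depth v - m := by
  intro m
  induction m with
  | zero => simp
  | succ n ih =>
    intro v hv
    have hvr : v ≠ T.root := ne_root_of_depth_pos (by omega)
    have h1 : T.depth (T.parent v) = T.depth v - 1 := depth_parent hvr
    rw [Function.iterate_succ_apply, ih (T.parent v) (by omega), h1]
    omega

lemma desc_refl (T : LTree σ) (u : T.U) : Desc T u u := ⟨le_rfl, by simp⟩

lemma iterate_depth (T : LTree σ) (v : T.U) : T.parent^[T.depth v] v = T.root := by
  generalize hn : T.depth v = n
  induction n generalizing v with
  | zero => exact depth_eq_zero hn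
  | succ n ih =>
    have hvr : v ≠ T.root := ne_root_of_depth_pos (by omega)
    rw [Function.iterate_succ_apply]
    exact ih (T.parent v) (by rw [depth_parent hvr, hn]; omega)


lemma desc_root (T : LTree σ) (v : T.U) : Desc T T.root v := by
  refine ⟨by rw [T.depth_root]; exact Nat.zero_le _, ?_⟩
  rw [T.depth_root, Nat.sub_zero]
  exact iterate_depth T v

lemma desc_depth_lt {T : LTree σ} {u v : T.U} (h : Desc T u v) (hne : v ≠ u) :
    T.depth u < T.depth v := by
  obtain ⟨h1, h2⟩ := h
  rcases lt_or_eq_of_le h1 with h | h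
  · exact h
  · exfalso; apply hne
    have : T.depth v - T.depth u = 0 := by omega
    rw [this] at h2; simpa using h2

lemma desc_parent {T : LTree σ} {u v : T.U} (h : Desc T u v) (hne : v ≠ u) :
    Desc T u (T.parent v) := by
  have hlt := desc_depth_lt h hne
  have hvr : v ≠ T.root := ne_root_of_depth_pos (by omega)
  have hdp : T.depth (T.parent v) = T.depth v - 1 := depth_parent hvr
  refine ⟨by omega, ?_⟩
  have harith : T.depth v - T.depth u = (T.depth (T.parent v) - T.depth u) + 1 := by omega
  have := h.2
  rw [harith, Function.iterate_succ_apply] at this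
  exact this

lemma desc_trans {T : LTree σ} {u c v : T.U} (h1 : Desc T u c) (h2 : Desc T c v) :
    Desc T u v := by
  refine ⟨le_trans h1.1 h2.1, ?_⟩
  have harith : T.depth v - T.depth u = (T.depth c - T.depth u) + (T.depth v - T.depth c) := by
    have := h1.1; have := h2.1; omega
  rw [harith, Function.iterate_add_apply, h2.2, h1.2]

lemma child_ne_root {T : LTree σ} {u c : T.U} (hp : T.parent c = u) (hne : c ≠ u) :
    c ≠ T.root := by
  intro h; apply hne; rw [h] at hp ⊢; rw [← hp, T.parent_root]

lemma child_depth {T : LTree σ} {u c : T.U} (hp : T.parent c = u) (hne : c ≠ u) :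
    T.depth c = T.depth u + 1 := by
  have h := T.depth_succ c (child_ne_root hp hne)
  rw [hp] at h; omega

lemma desc_of_parent {T : LTree σ} {u c : T.U} (hp : T.parent c = u) (hne : c ≠ u) :
    Desc T u c := by
  have hd := child_depth hp hne
  refine ⟨by omega, ?_⟩
  have : T.depth c - T.depth u = 1 := by omega
  rw [this]; simpa using hp

lemma exists_child {T : LTree σ} {u v : T.U} (h : Desc T u v) (hne : v ≠ u) :
    ∃ c, T.parent c = u ∧ c ≠ u ∧ Desc T c v := by
  have hlt := desc_depth_lt h hne
  refine ⟨T.parent^[T.depth v - T.depth u - 1] v, ?_, ?_, ?_⟩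
  · have harith : T.depth v - T.depth u = (T.depth v - T.depth u - 1) + 1 := by omega
    have := h.2
    rw [harith, Function.iterate_succ_apply'] at this
    exact this
  · intro hc
    have := depth_iterate T (T.depth v - T.depth u - 1) v (by omega)
    rw [hc] at this; omega
  · have hdc := depth_iterate T (T.depth v - T.depth u - 1) v (by omega)
    refine ⟨by omega, ?_⟩
    have : T.depth v - T.depth (T.parent^[T.depth v - T.depth u - 1] v)
        = T.depth v - T.depth u - 1 := by omega
    rw [this]

lemma desc_unique {T : LTree σ} {c c' v : T.U} (h : Desc T c v) (h' : Desc T c' v)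
    (hd : T.depth c = T.depth c') : c = c' := by
  obtain ⟨hle1, h2⟩ := h
  obtain ⟨hle2, h2'⟩ := h'
  rw [← h2, ← h2', hd]

lemma desc_self_of_depth_eq {T : LTree σ} {c v : T.U} (h : Desc T c v)
    (hd : T.depth c = T.depth v) : v = c := by
  have := h.2
  rw [show T.depth v - T.depth c = 0 by omega] at this
  simpa using this

/-- The list of children of a node. -/
noncomputable def childList (T : LTree σ) (u : T.U) : List T.U :=
  letI := T.fin
  (Finset.univ.filter (fun c => T.parent c = u ∧ c ≠ u)).toList

lemma mem_childList {T : LTree σ} {u c : T.U} :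
    c ∈ childList T u ↔ T.parent c = u ∧ c ≠ u := by
  letI := T.fin
  simp [childList]

lemma childList_nodup (T : LTree σ) (u : T.U) : (childList T u).Nodup := by
  letI := T.fin
  exact Finset.nodup_toList _

/-- Codes for trees of depth at most `k`. -/
def Code (σ : Type) : ℕ → Type
  | 0 => σ
  | k + 1 => σ × List (Code σ k)

/-- The code of the subtree rooted at a node, truncated at depth `k`. -/
noncomputable def codeAt (σ : Type) : (k : ℕ) → (T : LTree σ) → T.U → Code σ k
  | 0, T, u => T.label u
  | k + 1, T, u => (T.label u, (childList T u).map (codeAt σ k T))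

/-- The embedding quasi-order on codes. -/
def CodeLE (σ : Type) : (k : ℕ) → Code σ k → Code σ k → Prop
  | 0 => Eq
  | k + 1 => fun x y => x.1 = y.1 ∧ List.SublistForall₂ (CodeLE σ k) x.2 y.2

lemma codeLE_refl (σ : Type) : ∀ k (x : Code σ k), CodeLE σ k x x
  | 0, _ => rfl
  | k + 1, x => ⟨rfl, by
      haveI : IsRefl (Code σ k) (CodeLE σ k) := ⟨codeLE_refl σ k⟩
      exact refl_of (List.SublistForall₂ (CodeLE σ k)) _⟩

lemma codeLE_trans (σ : Type) :
    ∀ k (x y z : Code σ k), CodeLE σ k x y → CodeLE σ k y z → CodeLE σ k x z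
  | 0, _, _, _, h1, h2 => h1.trans h2
  | k + 1, x, y, z, h1, h2 => ⟨h1.1.trans h2.1, by
      haveI : IsTrans (Code σ k) (CodeLE σ k) := ⟨codeLE_trans σ k⟩
      exact _root_.trans h1.2 h2.2⟩

lemma codePWO (σ : Type) [Finite σ] :
    ∀ k, (Set.univ : Set (Code σ k)).PartiallyWellOrderedOn (CodeLE σ k)
  | 0 => by
      haveI : Finite (Code σ 0) := ‹Finite σ›
      haveI : IsRefl (Code σ 0) (CodeLE σ 0) := ⟨fun x => rfl⟩
      exact Set.finite_univ.partiallyWellOrderedOn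
  | k + 1 => by
      haveI : IsRefl (Code σ k) (CodeLE σ k) := ⟨codeLE_refl σ k⟩
      haveI : IsTrans (Code σ k) (CodeLE σ k) := ⟨codeLE_trans σ k⟩
      haveI : IsRefl σ Eq := ⟨fun _ => rfl⟩
      haveI : IsPreorder (Code σ k) (CodeLE σ k) := {}
      have h0 : (Set.univ : Set σ).PartiallyWellOrderedOn Eq :=
        Set.finite_univ.partiallyWellOrderedOn
      have h1 := Set.PartiallyWellOrderedOn.partiallyWellOrderedOn_sublistForall₂
        (CodeLE σ k) (codePWO σ k)
      have h2 : (Set.univ : Set (List (Code σ k))).PartiallyWellOrderedOn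
          (List.SublistForall₂ (CodeLE σ k)) := h1.mono (by intro l _; simp)
      have h3 := h0.prod h2
      rw [Set.univ_prod_univ] at h3
      exact h3

/-- Decoding: a code inequality yields a subtree embedding. -/
lemma decode (σ : Type) : ∀ (k : ℕ) (T1 T2 : LTree σ) (u1 : T1.U) (u2 : T2.U),
    (∀ v, Desc T1 u1 v → T1.depth v ≤ T1.depth u1 + k) →
    CodeLE σ k (codeAt σ k T1 u1) (codeAt σ k T2 u2) →
    ∃ φ : T1.U → T2.U,
      (∀ v, Desc T1 u1 v → Desc T2 u2 (φ v)) ∧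
      (Set.InjOn φ {v | Desc T1 u1 v}) ∧
      φ u1 = u2 ∧
      (∀ v, Desc T1 u1 v → T2.label (φ v) = T1.label v) ∧
      (∀ v, Desc T1 u1 v → v ≠ u1 →
        φ v ≠ u2 ∧ T2.parent (φ v) = φ (T1.parent v)) := by
  intro k
  induction k with
  | zero =>
    intro T1 T2 u1 u2 hdep hle
    have hall : ∀ v, Desc T1 u1 v → v = u1 := by
      intro v hv
      by_contra h
      have h1 := desc_depth_lt hv h
      have h2 := hdep v hv
      omega
    have hlab : T1.label u1 = T2.label u2 := hle
    refine ⟨fun _ => u2, fun _ _ => desc_refl _ _, ?_, rfl, ?_, ?_⟩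
    · intro a ha b hb _
      rw [hall a ha, hall b hb]
    · intro v hv; rw [hall v hv, ← hlab]
    · intro v hv hne; exact absurd (hall v hv) hne
  | succ k ih =>
    intro T1 T2 u1 u2 hdep hle
    have hlab : T1.label u1 = T2.label u2 := hle.1
    have hsf : List.SublistForall₂ (CodeLE σ k)
        ((childList T1 u1).map (codeAt σ k T1)) ((childList T2 u2).map (codeAt σ k T2)) := hle.2
    rw [List.sublistForall₂_map_left_iff, List.sublistForall₂_map_right_iff,
      List.sublistForall₂_iff] at hsf
    obtain ⟨s, hfor, hsub⟩ := hsf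
    set l1 := childList T1 u1 with hl1
    set l2 := childList T2 u2 with hl2
    have hnd1 : l1.Nodup := childList_nodup T1 u1
    have hnds : s.Nodup := (childList_nodup T2 u2).sublist hsub
    have hlen : l1.length = s.length := hfor.length_eq
    have hget := (List.forall₂_iff_get.1 hfor).2
    -- the matching of children
    let ψ : T1.U → T2.U := fun c =>
      if h : c ∈ l1 then
        s.get ⟨l1.idxOf c, by rw [← hlen]; exact List.idxOf_lt_length_iff.2 h⟩
      else T2.root
    have hψmem : ∀ c ∈ l1, ψ c ∈ s := by
      intro c hc
      simp only [ψ, dif_pos hc]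
      exact List.get_mem _ _
    have hψle : ∀ c ∈ l1, CodeLE σ k (codeAt σ k T1 c) (codeAt σ k T2 (ψ c)) := by
      intro c hc
      have h1 : l1.idxOf c < l1.length := List.idxOf_lt_length_iff.2 hc
      have := hget (l1.idxOf c) h1 (by omega)
      rw [List.idxOf_get] at this
      simpa only [ψ, dif_pos hc] using this
    have hψinj : ∀ c ∈ l1, ∀ c' ∈ l1, ψ c = ψ c' → c = c' := by
      intro c hc c' hc' h
      simp only [ψ, dif_pos hc, dif_pos hc'] at h
      rw [hnds.get_inj_iff] at h
      have h' : l1.idxOf c = l1.idxOf c' := by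
        simpa using congrArg Fin.val h
      exact (List.idxOf_inj hc).1 h'
    -- facts about children
    have hchild1 : ∀ c ∈ l1, T1.parent c = u1 ∧ c ≠ u1 := fun c hc => mem_childList.1 hc
    have hdepth1 : ∀ c ∈ l1, T1.depth c = T1.depth u1 + 1 := by
      intro c hc; exact child_depth (hchild1 c hc).1 (hchild1 c hc).2
    have hmem2 : ∀ c ∈ l1, ψ c ∈ l2 := fun c hc => hsub.subset (hψmem c hc)
    have hchild2 : ∀ d ∈ l2, T2.parent d = u2 ∧ d ≠ u2 := fun d hd => mem_childList.1 hd
    have hdepth2 : ∀ d ∈ l2, T2.depth d = T2.depth u2 + 1 := by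
      intro d hd; exact child_depth (hchild2 d hd).1 (hchild2 d hd).2
    have hkey2 : ∀ d ∈ l2, ∀ w, Desc T2 d w → Desc T2 u2 w ∧ w ≠ u2 := by
      intro d hd w hw
      have hdd := hdepth2 d hd
      constructor
      · exact desc_trans (desc_of_parent (hchild2 d hd).1 (hchild2 d hd).2) hw
      · intro h; rw [h] at hw; have := hw.1; omega
    -- child embeddings from the induction hypothesis
    have H : ∀ c : {c // c ∈ l1}, ∃ φ : T1.U → T2.U,
        (∀ v, Desc T1 c.1 v → Desc T2 (ψ c.1) (φ v)) ∧
        (Set.InjOn φ {v | Desc T1 c.1 v}) ∧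
        φ c.1 = ψ c.1 ∧
        (∀ v, Desc T1 c.1 v → T2.label (φ v) = T1.label v) ∧
        (∀ v, Desc T1 c.1 v → v ≠ c.1 →
          φ v ≠ ψ c.1 ∧ T2.parent (φ v) = φ (T1.parent v)) := by
      rintro ⟨c, hc⟩
      apply ih T1 T2 c (ψ c) _ (hψle c hc)
      intro v hv
      have h1 : Desc T1 u1 v :=
        desc_trans (desc_of_parent (hchild1 c hc).1 (hchild1 c hc).2) hv
      have := hdep v h1
      have := hdepth1 c hc
      omega
    choose Φ hΦdesc hΦinj hΦroot hΦlab hΦpar using H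
    -- the canonical child containing a proper descendant
    have hex : ∀ v, Desc T1 u1 v → v ≠ u1 → ∃ c : {c // c ∈ l1}, Desc T1 c.1 v := by
      intro v hv hne
      obtain ⟨c, hp, hcne, hd⟩ := exists_child hv hne
      exact ⟨⟨c, mem_childList.2 ⟨hp, hcne⟩⟩, hd⟩
    choose cho hcho using hex
    have hcho_uniq : ∀ v hv hne (c : {c // c ∈ l1}), Desc T1 c.1 v → cho v hv hne = c := by
      rintro v hv hne ⟨c, hc⟩ hdc
      have h1 := hcho v hv hne
      have := desc_unique h1 hdc
        (by rw [hdepth1 _ (cho v hv hne).2, hdepth1 c hc])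
      exact Subtype.ext this
    -- the glued map
    let φ0 : T1.U → T2.U := fun v =>
      if h : Desc T1 u1 v ∧ v ≠ u1 then Φ (cho v h.1 h.2) v else u2
    have hφ0 : ∀ v (h : Desc T1 u1 v) (hne : v ≠ u1), φ0 v = Φ (cho v h hne) v :=
      fun v h hne => dif_pos ⟨h, hne⟩
    have hφ0' : ∀ v, ¬(Desc T1 u1 v ∧ v ≠ u1) → φ0 v = u2 := fun v h => dif_neg h
    refine ⟨φ0, ?_, ?_, ?_, ?_, ?_⟩
    · -- maps descendants to descendants
      intro v hv
      by_cases h : v = u1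
      · rw [hφ0' v (by tauto)]; exact desc_refl _ _
      · rw [hφ0 v hv h]
        exact (hkey2 _ (hmem2 _ (cho v hv h).2) _ (hΦdesc _ v (hcho v hv h))).1
    · -- injectivity on descendants
      intro a ha b hb hab
      simp only [Set.mem_setOf_eq] at ha hb
      by_cases h1 : a = u1 <;> by_cases h2 : b = u1
      · rw [h1, h2]
      · exfalso
        rw [hφ0' a (by tauto), hφ0 b hb h2] at hab
        exact (hkey2 _ (hmem2 _ (cho b hb h2).2) _ (hΦdesc _ b (hcho b hb h2))).2 hab.symm
      · exfalso
        rw [hφ0' b (by tauto), hφ0 a ha h1] at hab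
        exact (hkey2 _ (hmem2 _ (cho a ha h1).2) _ (hΦdesc _ a (hcho a ha h1))).2 hab
      · rw [hφ0 a ha h1, hφ0 b hb h2] at hab
        have hda := hΦdesc (cho a ha h1) a (hcho a ha h1)
        have hdb := hΦdesc (cho b hb h2) b (hcho b hb h2)
        rw [hab] at hda
        have hcc : ψ (cho a ha h1).1 = ψ (cho b hb h2).1 :=
          desc_unique hda hdb
            (by rw [hdepth2 _ (hmem2 _ (cho a ha h1).2), hdepth2 _ (hmem2 _ (cho b hb h2).2)])
        have hcc' : cho a ha h1 = cho b hb h2 :=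
          Subtype.ext (hψinj _ (cho a ha h1).2 _ (cho b hb h2).2 hcc)
        rw [← hcc'] at hab
        exact hΦinj (cho a ha h1) (hcho a ha h1)
          (by rw [hcc']; exact hcho b hb h2) hab
    · -- root
      exact hφ0' u1 (by tauto)
    · -- labels
      intro v hv
      by_cases h : v = u1
      · rw [hφ0' v (by tauto), h, ← hlab]
      · rw [hφ0 v hv h]; exact hΦlab _ v (hcho v hv h)
    · -- parent
      intro v hv hne
      rw [hφ0 v hv hne]
      have hdc : Desc T1 (cho v hv hne).1 v := hcho v hv hne
      constructor
      · exact (hkey2 _ (hmem2 _ (cho v hv hne).2) _ (hΦdesc _ v hdc)).2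
      · by_cases hvc : v = (cho v hv hne).1
        · -- v is itself a child of u1
          have hpv : T1.parent v = u1 := by
            rw [hvc]; exact (hchild1 _ (cho v hv hne).2).1
          rw [hpv, hφ0' u1 (by tauto)]
          have hroot' := hΦroot (cho v hv hne)
          rw [← hvc] at hroot'
          rw [hroot', hvc]
          exact (hchild2 _ (hmem2 _ (cho v hv hne).2)).1
        · -- v is a deeper descendant
          have hdpc : Desc T1 (cho v hv hne).1 (T1.parent v) := desc_parent hdc hvc
          have hdu : T1.depth (cho v hv hne).1 = T1.depth u1 + 1 :=
            hdepth1 _ (cho v hv hne).2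
          have hlt : T1.depth (cho v hv hne).1 < T1.depth v := desc_depth_lt hdc hvc
          have hvroot : v ≠ T1.root := ne_root_of_depth_pos (by omega)
          have hdpv : T1.depth (T1.parent v) = T1.depth v - 1 := depth_parent hvroot
          have hpne : T1.parent v ≠ u1 := by
            intro h; rw [h] at hdpv; omega
          have hpdesc : Desc T1 u1 (T1.parent v) := desc_parent hv hne
          rw [hφ0 (T1.parent v) hpdesc hpne,
            hcho_uniq (T1.parent v) hpdesc hpne (cho v hv hne) hdpc]
          exact (hΦpar _ v hdc hvc).2

end LTreeWQO

/-- The embedding relation on labeled trees of depth at most `K` over a finite alphabet is a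
well-quasi-order: every infinite sequence contains `i < j` with `T_i ≤ T_j`. -/
theorem stmt4 (σ : Type) [Finite σ] (K : ℕ) (f : ℕ → LTree σ)
    (hd : ∀ n, ∀ u, (f n).depth u ≤ K) :
    ∃ i j, i < j ∧ (f i).Emb (f j) := by
  open LTreeWQO in
  obtain ⟨i, j, hij, hle⟩ := (codePWO σ K).exists_lt
    (f := fun n => codeAt σ K (f n) (f n).root) (fun n => Set.mem_univ _)
  refine ⟨i, j, hij, ?_⟩
  obtain ⟨φ, hdesc, hinj, hroot, hlab, hpar⟩ := decode σ K (f i) (f j)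
    (f i).root (f j).root (fun v _ => by rw [(f i).depth_root]; simpa using hd i v) hle
  refine ⟨φ, ?_, hroot, ?_, ?_⟩
  · intro a b h
    exact hinj (desc_root _ a) (desc_root _ b) h
  · intro u; exact hlab u (desc_root _ u)
  · intro u hu; exact hpar u (desc_root _ u) hu
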